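/- With the metric h' = h·(Id + η) (η a small h-hermitian endomorphism), the weighted sum of orthogonal projections onto the subbundles of a holomorphic filtration expands to first order as ∑ᵢ τᵢ π^𝒻_{h',i} = ∑ᵢ τᵢ π^𝒻_{h,i} + Π^{𝒻,τ}_h(η) + O(η²), where Π^{𝒻,τ}_h(η) = ∑ᵢ τᵢ π^𝒻_{h,i} η (Id − π^𝒻_{h,i}). -/

import Mathlib

open scoped InnerProductSpace

/-- Single-projection version: if `π` is an idempotent with range `W`,
self-adjoint for the deformed metric, and `p` is the `h`-orthogonal
projection onto `W`, then `‖π - p - pη(1-p)‖ ≤ 4‖η‖²` for `‖η‖ ≤ 1/2`. -/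
lemma stmt17_aux {H : Type*} [NormedAddCommGroup H] [InnerProductSpace ℂ H]
    [FiniteDimensional ℂ H] (W : Submodule ℂ H) (p π η : H →L[ℂ] H)
    (hp : p = W.subtypeL.comp (W.orthogonalProjectionOnto))
    (hηs : ‖η‖ ≤ 1/2)
    (hidem : π * π = π) (hrange : LinearMap.range (π : H →ₗ[ℂ] H) = W)
    (hstarη : star η = η)
    (hsa : star ((1 + η) * π) = (1 + η) * π) :
    ‖π - p - p * (η * (1 - p))‖ ≤ 4 * ‖η‖ ^ 2 := by
  -- basic facts about p and π
  have hpw : ∀ w ∈ W, p w = w := by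
    intro w hw
    rw [hp]
    exact Submodule.starProjection_eq_self_iff.2 hw
  have hπmem : ∀ x, π x ∈ W := by
    intro x; rw [← hrange]; exact ⟨x, rfl⟩
  have hpmem : ∀ x, p x ∈ W := by
    intro x; rw [hp]; exact ((W.orthogonalProjectionOnto) x).2
  have hπw : ∀ w ∈ W, π w = w := by
    intro w hw
    rw [← hrange] at hw
    obtain ⟨z, rfl⟩ := hw
    have := DFunLike.congr_fun hidem z
    simpa [ContinuousLinearMap.mul_apply] using this
  have hpp : p * p = p := by
    ext x; exact hpw _ (hpmem x)
  have hpπ : p * π = π := by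
    ext x; exact hpw _ (hπmem x)
  have hπp : π * p = p := by
    ext x; exact hπw _ (hpmem x)
  have hstarp : star p = p := by
    rw [hp]; exact (isSelfAdjoint_starProjection W).star_eq
  set A : H →L[ℂ] H := π - p with hA
  have hπeq : π = p + A := by rw [hA]; abel
  have hpA : p * A = A := by rw [hA, mul_sub, hpπ, hpp]
  have hAp : A * p = 0 := by rw [hA, sub_mul, hπp, hpp, sub_self]
  have hAq : A * (1 - p) = A := by rw [mul_sub, mul_one, hAp, sub_zero]
  have h1 : p * (1 - p) = 0 := by rw [mul_sub, mul_one, hpp, sub_self]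
  have hpA' : p * star A = 0 := by
    rw [← hstarp, ← star_mul, hAp, star_zero]
  -- the self-adjointness equation
  have E : (1 + η) * (p + A) = (p + star A) * (1 + η) := by
    have h2 : star ((1 + η) * π) = (p + star A) * (1 + η) := by
      rw [star_mul, star_add, star_one, hstarη, hπeq, star_add, hstarp]
    rw [← hπeq, ← h2, hsa]
  -- extract the key equation by multiplying by p on the left and (1-p) on the right
  have L : p * ((1 + η) * (p + A)) * (1 - p) = A + p * (η * A) := by
    have expand : p * ((1 + η) * (p + A)) * (1 - p)
        = (p * p) * (1 - p) + (p * A) * (1 - p)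
          + (p * η) * (p * (1 - p)) + (p * η) * (A * (1 - p)) := by noncomm_ring
    rw [expand, hpp, hpA, h1, hAq, mul_zero]
    noncomm_ring
  have R : p * ((p + star A) * (1 + η)) * (1 - p) = p * (η * (1 - p)) := by
    have expand : p * ((p + star A) * (1 + η)) * (1 - p)
        = (p * p) * (1 - p) + (p * p) * (η * (1 - p))
          + (p * star A) * (1 - p) + (p * star A) * (η * (1 - p)) := by noncomm_ring
    rw [expand, hpp, hpA', h1, zero_mul, zero_mul]
    noncomm_ring
  have key : A + p * (η * A) = p * (η * (1 - p)) := by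
    rw [← L, ← R, E]
  -- norm estimates
  have hnp : ‖p‖ ≤ 1 := by
    rw [hp]
    calc ‖W.subtypeL.comp (W.orthogonalProjectionOnto)‖
        ≤ ‖W.subtypeL‖ * ‖(W.orthogonalProjectionOnto : H →L[ℂ] W)‖ :=
          ContinuousLinearMap.opNorm_comp_le _ _
      _ ≤ 1 * 1 := by
          gcongr
          · exact Submodule.norm_subtypeL_le W
          · exact Submodule.orthogonalProjectionOnto_norm_le W
      _ = 1 := one_mul 1
  have hnq : ‖(1 : H →L[ℂ] H) - p‖ ≤ 2 := by
    calc ‖(1 : H →L[ℂ] H) - p‖ ≤ ‖(1 : H →L[ℂ] H)‖ + ‖p‖ := norm_sub_le _ _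
      _ ≤ 1 + 1 := by gcongr; exact ContinuousLinearMap.norm_id_le
      _ = 2 := by norm_num
  have hηnn : (0 : ℝ) ≤ ‖η‖ := norm_nonneg _
  have hbound : ∀ B : H →L[ℂ] H, ‖p * (η * B)‖ ≤ ‖η‖ * ‖B‖ := by
    intro B
    calc ‖p * (η * B)‖ ≤ ‖p‖ * ‖η * B‖ := norm_mul_le _ _
      _ ≤ 1 * (‖η‖ * ‖B‖) := by
          gcongr
          exact norm_mul_le _ _
      _ = ‖η‖ * ‖B‖ := one_mul _
  have hAeq : A = p * (η * (1 - p)) - p * (η * A) := by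
    rw [← key]; abel
  have hAnorm : ‖A‖ ≤ 4 * ‖η‖ := by
    have h3 : ‖A‖ ≤ ‖η‖ * 2 + ‖η‖ * ‖A‖ := by
      calc ‖A‖ = ‖p * (η * (1 - p)) - p * (η * A)‖ := by rw [← hAeq]
        _ ≤ ‖p * (η * (1 - p))‖ + ‖p * (η * A)‖ := norm_sub_le _ _
        _ ≤ ‖η‖ * ‖(1 : H →L[ℂ] H) - p‖ + ‖η‖ * ‖A‖ := add_le_add (hbound _) (hbound _)
        _ ≤ ‖η‖ * 2 + ‖η‖ * ‖A‖ := by gcongr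
    have h4 : ‖η‖ * ‖A‖ ≤ (1/2) * ‖A‖ :=
      mul_le_mul_of_nonneg_right hηs (norm_nonneg _)
    nlinarith [norm_nonneg A]
  have hdiff : π - p - p * (η * (1 - p)) = -(p * (η * A)) := by
    have hππ : π - p = A := hA.symm ▸ rfl
    rw [hππ, ← key]
    abel
  calc ‖π - p - p * (η * (1 - p))‖ = ‖p * (η * A)‖ := by rw [hdiff, norm_neg]
    _ ≤ ‖η‖ * ‖A‖ := hbound _
    _ ≤ ‖η‖ * (4 * ‖η‖) := by gcongr
    _ = 4 * ‖η‖ ^ 2 := by ring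

theorem stmt17 {H : Type*} [NormedAddCommGroup H] [InnerProductSpace ℂ H]
    [FiniteDimensional ℂ H] {m : ℕ}
    (W : Fin m → Submodule ℂ H) (τ : Fin m → ℝ)
    (P : Fin m → (H →L[ℂ] H))
    (hP : ∀ j, P j = (W j).subtypeL.comp ((W j).orthogonalProjectionOnto)) :
    ∃ ε > (0 : ℝ), ∃ C : ℝ, ∀ η : H →L[ℂ] H,
      (∀ x y : H, ⟪η x, y⟫_ℂ = ⟪x, η y⟫_ℂ) → ‖η‖ < ε →
      ∀ π' : Fin m → (H →L[ℂ] H),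
        (∀ j, π' j ∘L π' j = π' j) →
        (∀ j, LinearMap.range (π' j : H →ₗ[ℂ] H) = W j) →
        (∀ j, ∀ x y : H, ⟪(1 + η) (π' j x), y⟫_ℂ = ⟪(1 + η) x, π' j y⟫_ℂ) →
        ‖(∑ j, (τ j : ℂ) • π' j) - (∑ j, (τ j : ℂ) • P j)
            - ∑ j, (τ j : ℂ) • (P j ∘L η ∘L (1 - P j))‖ ≤ C * ‖η‖ ^ 2 := by
  refine ⟨1/2, by norm_num, (∑ j, |τ j|) * 4, ?_⟩
  intro η hsym hηs π' hidem hrange hsa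
  have hstarη : star η = η := by
    rw [ContinuousLinearMap.star_eq_adjoint]
    exact ((ContinuousLinearMap.eq_adjoint_iff η η).2 hsym).symm
  have hsaη : ∀ x y : H, ⟪(1 + η) x, y⟫_ℂ = ⟪x, (1 + η) y⟫_ℂ := by
    intro x y
    simp only [ContinuousLinearMap.add_apply, ContinuousLinearMap.one_apply,
      inner_add_left, inner_add_right, hsym]
  have hjb : ∀ j, ‖π' j - P j - P j * (η * (1 - P j))‖ ≤ 4 * ‖η‖ ^ 2 := by
    intro j
    refine stmt17_aux (W j) (P j) (π' j) η (hP j) (le_of_lt hηs) (hidem j) (hrange j) hstarη ?_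
    rw [ContinuousLinearMap.star_eq_adjoint]
    refine ((ContinuousLinearMap.eq_adjoint_iff _ _).2 ?_).symm
    intro x y
    calc ⟪((1 + η) * π' j) x, y⟫_ℂ = ⟪(1 + η) (π' j x), y⟫_ℂ := rfl
      _ = ⟪(1 + η) x, π' j y⟫_ℂ := hsa j x y
      _ = ⟪x, (1 + η) (π' j y)⟫_ℂ := hsaη x (π' j y)
      _ = ⟪x, ((1 + η) * π' j) y⟫_ℂ := rfl
  have hsum : (∑ j, (τ j : ℂ) • π' j) - (∑ j, (τ j : ℂ) • P j)
      - ∑ j, (τ j : ℂ) • (P j ∘L η ∘L (1 - P j))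
      = ∑ j, (τ j : ℂ) • (π' j - P j - P j * (η * (1 - P j))) := by
    rw [← Finset.sum_sub_distrib, ← Finset.sum_sub_distrib]
    refine Finset.sum_congr rfl fun j _ => ?_
    rw [smul_sub, smul_sub]
    rfl
  rw [hsum]
  calc ‖∑ j, (τ j : ℂ) • (π' j - P j - P j * (η * (1 - P j)))‖
      ≤ ∑ j, ‖(τ j : ℂ) • (π' j - P j - P j * (η * (1 - P j)))‖ := norm_sum_le _ _
    _ ≤ ∑ j, |τ j| * (4 * ‖η‖ ^ 2) := by
        refine Finset.sum_le_sum fun j _ => ?_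
        rw [norm_smul ((τ j : ℂ)) (π' j - P j - P j * (η * (1 - P j)))]
        have hτ : ‖(τ j : ℂ)‖ = |τ j| := by
          simp [Complex.norm_real]
        rw [hτ]
        exact mul_le_mul_of_nonneg_left (hjb j) (abs_nonneg _)
    _ = (∑ j, |τ j|) * 4 * ‖η‖ ^ 2 := by rw [← Finset.sum_mul]; ring
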